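/- arXiv:2008.02173 — 3 statements merged into one kernel-verified Lean document; each statement's English description precedes it below -/
import Mathlib

section
/- Let G be a finite cocomparability graph with a branch partition 𝒫, and let B₀, B₁, B₂ be three pairwise adjacent parts of 𝒫. Then B_{i,i−1} = B_{i,i+1} for each i ∈ {0,1,2} (indices mod 3), and the set B_{0,1} ∪ B_{1,2} ∪ B_{2,0} induces a clique in G. -/
/-- A closed axis-parallel line segment in the plane, designated horizontal or
vertical; degenerate one-point segments are allowed. -/
structure Seg where
  horiz : Bool
  coord : ℝ
  lo : ℝ
  hi : ℝ
  lo_le_hi : lo ≤ hi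

/-- The set of points of an axis-parallel segment. -/
def Seg.set (s : Seg) : Set (ℝ × ℝ) :=
  if s.horiz then {p : ℝ × ℝ | p.2 = s.coord ∧ p.1 ∈ Set.Icc s.lo s.hi}
  else {p : ℝ × ℝ | p.1 = s.coord ∧ p.2 ∈ Set.Icc s.lo s.hi}

/-- `I` is a B₀-VPG representation of `G`: two distinct vertices are adjacent
iff their segments intersect. -/
def IsB0Rep {V : Type*} (G : SimpleGraph V) (I : V → Seg) : Prop :=
  ∀ u v : V, u ≠ v → (G.Adj u v ↔ ((I u).set ∩ (I v).set).Nonempty)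

/-- `G` is a B₀-VPG graph. -/
def IsB0VPG {V : Type*} (G : SimpleGraph V) : Prop :=
  ∃ I : V → Seg, IsB0Rep G I

/-- `G` is a cocomparability graph. -/
def IsCocomparability {V : Type*} (G : SimpleGraph V) : Prop :=
  ∃ P : PartialOrder V, ∀ u v : V, u ≠ v →
    (G.Adj u v ↔ ¬ (P.le u v ∨ P.le v u))

/-- `G` is a comparability graph. -/
def IsComparability {V : Type*} (G : SimpleGraph V) : Prop :=
  ∃ P : PartialOrder V, ∀ u v : V, u ≠ v →
    (G.Adj u v ↔ (P.le u v ∨ P.le v u))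

/-- `a, b, c, d` form an induced 4-cycle in `G`. -/
def IsInducedC4 {V : Type*} (G : SimpleGraph V) (a b c d : V) : Prop :=
  a ≠ b ∧ a ≠ c ∧ a ≠ d ∧ b ≠ c ∧ b ≠ d ∧ c ≠ d ∧
  G.Adj a b ∧ G.Adj b c ∧ G.Adj c d ∧ G.Adj d a ∧ ¬ G.Adj a c ∧ ¬ G.Adj b d

/-- `xy` is a diamond diagonal of `G`. -/
def IsDiamondDiagonal {V : Type*} (G : SimpleGraph V) (x y : V) : Prop :=
  G.Adj x y ∧ ∃ u w : V, u ≠ w ∧ u ≠ x ∧ u ≠ y ∧ w ≠ x ∧ w ≠ y ∧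
    ¬ G.Adj u w ∧ G.Adj u x ∧ G.Adj u y ∧ G.Adj w x ∧ G.Adj w y

/-- `x` and `y` are diamond related in `G`: they are joined by a sequence of
diamond diagonals. -/
def DiamondRelated {V : Type*} (G : SimpleGraph V) : V → V → Prop :=
  Relation.ReflTransGen (IsDiamondDiagonal G)

/-- No two distinct vertices of an induced `C₄` of `G` are diamond related. -/
def NoC4DiamondRelated {V : Type*} (G : SimpleGraph V) : Prop :=
  ∀ a b c d : V, IsInducedC4 G a b c d →
    ∀ x ∈ ({a, b, c, d} : Set V), ∀ y ∈ ({a, b, c, d} : Set V),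
      x ≠ y → ¬ DiamondRelated G x y

/-- The complement of the 6-cycle. -/
def C6bar : SimpleGraph (Fin 6) where
  Adj i j := i ≠ j ∧ j - i ≠ 1 ∧ i - j ≠ 1
  symm := by
    constructor
    intro i j h
    exact ⟨h.1.symm, h.2.2, h.2.1⟩
  loopless := by
    constructor
    intro i h
    exact h.1 rfl

/-- `G` contains no induced copy of the complement of `C₆`. -/
def C6barFree {V : Type*} (G : SimpleGraph V) : Prop :=
  ¬ ∃ f : Fin 6 → V, Function.Injective f ∧
      ∀ i j : Fin 6, C6bar.Adj i j ↔ G.Adj (f i) (f j)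

/-- `σ` is an umbrella-free (cocomparability) ordering of `G`. -/
def UmbrellaFree {V : Type*} (G : SimpleGraph V) (σ : LinearOrder V) : Prop :=
  ∀ x y z : V, σ.lt x y → σ.lt y z → G.Adj x z → (G.Adj x y ∨ G.Adj y z)

/-- A branch partition of `G`: a partition of the vertex set into connected
parts such that both endpoints of every diamond diagonal lie in the same part
and no part contains two distinct vertices of a common induced `C₄`. -/
def IsBranchPartition {V : Type*} (G : SimpleGraph V) (P : Set (Set V)) : Prop :=
  (∀ B ∈ P, B.Nonempty) ∧
  (∀ B ∈ P, ∀ B' ∈ P, B ≠ B' → Disjoint B B') ∧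
  (∀ v : V, ∃ B ∈ P, v ∈ B) ∧
  (∀ B ∈ P, (SimpleGraph.induce B G).Connected) ∧
  (∀ x y : V, IsDiamondDiagonal G x y → ∀ B ∈ P, x ∈ B → y ∈ B) ∧
  (∀ a b c d : V, IsInducedC4 G a b c d → ∀ B ∈ P,
     ∀ x ∈ ({a, b, c, d} : Set V), ∀ y ∈ ({a, b, c, d} : Set V),
       x ≠ y → x ∈ B → y ∉ B)

/-- Two parts are adjacent if some edge of `G` has one endpoint in each. -/
def PartsAdjacent {V : Type*} (G : SimpleGraph V) (B B' : Set V) : Prop :=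
  ∃ u ∈ B, ∃ v ∈ B', G.Adj u v

/-- `Bset G Bi Bj` is the set of vertices of `Bi` having a neighbor in `Bj`. -/
def Bset {V : Type*} (G : SimpleGraph V) (Bi Bj : Set V) : Set V :=
  {v ∈ Bi | ∃ u ∈ Bj, G.Adj v u}
namespace BranchTri

variable {V : Type*}

/-- An indexed walk inside a set `S` from `a` to `b` of length `k`. -/
def IPath (G : SimpleGraph V) (S : Set V) (a b : V) (k : ℕ) (q : ℕ → V) : Prop :=
  q 0 = a ∧ q k = b ∧ (∀ i ≤ k, q i ∈ S) ∧ ∀ i < k, G.Adj (q i) (q (i + 1))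

/-- Structural properties of an induced, injective indexed path. -/
structure NicePath (G : SimpleGraph V) (k : ℕ) (p : ℕ → V) : Prop where
  adj : ∀ i < k, G.Adj (p i) (p (i + 1))
  nadj : ∀ i j, i + 2 ≤ j → j ≤ k → ¬ G.Adj (p i) (p j)
  ne : ∀ i j, i < j → j ≤ k → p i ≠ p j

lemma exists_min {p : ℕ → Prop} (h : ∃ n, p n) : ∃ n, p n ∧ ∀ m, p m → n ≤ m := by
  classical
  exact ⟨Nat.find h, Nat.find_spec h, fun m hm => Nat.find_min' h hm⟩

variable {G : SimpleGraph V}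

lemma ipath_exists {S : Set V} (hconn : (SimpleGraph.induce S G).Connected)
    {a b : V} (ha : a ∈ S) (hb : b ∈ S) : ∃ k q, IPath G S a b k q := by
  obtain ⟨w⟩ := hconn.preconnected ⟨a, ha⟩ ⟨b, hb⟩
  refine ⟨w.length, fun i => (w.getVert i : V), ?_, ?_, fun i _ => (w.getVert i).2,
    fun i hi => ?_⟩
  · exact congrArg Subtype.val w.getVert_zero
  · exact congrArg Subtype.val w.getVert_length
  · exact SimpleGraph.comap_adj.mp (w.adj_getVert_succ hi)

lemma ipath_edge {S : Set V} {a b : V} (h : G.Adj a b) (ha : a ∈ S) (hb : b ∈ S) :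
    IPath G S a b 1 (fun l => if l = 0 then a else b) := by
  refine ⟨by simp, by simp, ?_, ?_⟩
  · intro i _; by_cases h0 : i = 0 <;> simp [h0, ha, hb]
  · intro i hi
    have : i = 0 := by omega
    simp [this, h]

lemma ipath_suffix {S : Set V} {a b : V} {k : ℕ} {q : ℕ → V} (hp : IPath G S a b k q)
    {t : ℕ} (ht : t ≤ k) : IPath G S (q t) b (k - t) (fun l => q (t + l)) := by
  obtain ⟨h0, hk, hmem, hadj⟩ := hp
  refine ⟨by simp, ?_, ?_, ?_⟩
  · show q (t + (k - t)) = b; rw [show t + (k - t) = k by omega]; exact hk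
  · intro i hi; exact hmem _ (by omega)
  · intro i hi
    have := hadj (t + i) (by omega)
    rw [show t + i + 1 = t + (i + 1) by omega] at this
    exact this

lemma ipath_prefix {S : Set V} {a b : V} {k : ℕ} {q : ℕ → V} (hp : IPath G S a b k q)
    {t : ℕ} (ht : t ≤ k) : IPath G S a (q t) t q :=
  ⟨hp.1, rfl, fun i hi => hp.2.2.1 i (le_trans hi ht), fun i hi => hp.2.2.2 i (by omega)⟩

lemma ipath_splice_adj {S : Set V} {a b : V} {k : ℕ} {q : ℕ → V} (hp : IPath G S a b k q)
    {i j : ℕ} (hij : i + 2 ≤ j) (hjk : j ≤ k) (hadj : G.Adj (q i) (q j)) :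
    ∃ k' q', k' < k ∧ IPath G S a b k' q' := by
  obtain ⟨h0, hk, hmem, hadjp⟩ := hp
  set d := j - i - 1 with hd
  refine ⟨k - d, fun l => if l ≤ i then q l else q (l + d), by omega, ?_, ?_, ?_, ?_⟩
  · simpa using h0
  · have h1 : ¬ (k - d ≤ i) := by omega
    simp only [h1, if_false]
    rw [show k - d + d = k by omega]; exact hk
  · intro l hl; by_cases h : l ≤ i
    · simp only [h, if_true]; exact hmem l (by omega)
    · simp only [h, if_false]; exact hmem _ (by omega)
  · intro l hl
    by_cases h1 : l + 1 ≤ i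
    · simp only [h1, show l ≤ i by omega, if_true]; exact hadjp l (by omega)
    · by_cases h2 : l ≤ i
      · have hli : l = i := by omega
        simp only [h1, h2, if_true, if_false]
        subst hli
        rw [show l + 1 + d = j by omega]; exact hadj
      · simp only [h1, h2, if_false]
        rw [show l + 1 + d = l + d + 1 by omega]
        exact hadjp _ (by omega)

lemma ipath_splice_eq {S : Set V} {a b : V} {k : ℕ} {q : ℕ → V} (hp : IPath G S a b k q)
    {i j : ℕ} (hij : i < j) (hjk : j ≤ k) (heq : q i = q j) :
    ∃ k' q', k' < k ∧ IPath G S a b k' q' := by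
  rcases eq_or_lt_of_le hjk with hjk' | hjk'
  · -- j = k : use prefix
    subst hjk'
    refine ⟨i, q, by omega, hp.1, by rw [heq]; exact hp.2.1, fun l hl => hp.2.2.1 l (by omega),
      fun l hl => hp.2.2.2 l (by omega)⟩
  · obtain ⟨h0, hk, hmem, hadjp⟩ := hp
    set d := j - i with hd
    refine ⟨k - d, fun l => if l ≤ i then q l else q (l + d), by omega, ?_, ?_, ?_, ?_⟩
    · simpa using h0
    · have h1 : ¬ (k - d ≤ i) := by omega
      simp only [h1, if_false]
      rw [show k - d + d = k by omega]; exact hk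
    · intro l hl; by_cases h : l ≤ i
      · simp only [h, if_true]; exact hmem l (by omega)
      · simp only [h, if_false]; exact hmem _ (by omega)
    · intro l hl
      by_cases h1 : l + 1 ≤ i
      · simp only [h1, show l ≤ i by omega, if_true]; exact hadjp l (by omega)
      · by_cases h2 : l ≤ i
        · have hli : l = i := by omega
          simp only [h1, h2, if_true, if_false]
          subst hli
          rw [show l + 1 + d = j + 1 by omega, heq]
          exact hadjp j (by omega)
        · simp only [h1, h2, if_false]
          rw [show l + 1 + d = l + d + 1 by omega]
          exact hadjp _ (by omega)

lemma nice_of_min {S : Set V} {a b : V} {k : ℕ} {q : ℕ → V} (hp : IPath G S a b k q)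
    (hmin : ∀ k' q', IPath G S a b k' q' → k ≤ k') : NicePath G k q := by
  refine ⟨hp.2.2.2, ?_, ?_⟩
  · intro i j h2 hjk hadj
    obtain ⟨k', q', hlt, hp'⟩ := ipath_splice_adj hp h2 hjk hadj
    exact absurd (hmin _ _ hp') (by omega)
  · intro i j hij hjk heq
    obtain ⟨k', q', hlt, hp'⟩ := ipath_splice_eq hp hij hjk heq
    exact absurd (hmin _ _ hp') (by omega)

lemma NicePath.singleton (v : V) : NicePath G 0 (fun _ => v) :=
  ⟨fun i hi => by omega, fun i j h2 hj => by omega, fun i j hij hj => by omega⟩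

lemma NicePath.sub {k : ℕ} {p : ℕ → V} (h : NicePath G k p) {a b : ℕ} (hab : a ≤ b)
    (hbk : b ≤ k) : NicePath G (b - a) (fun l => p (a + l)) := by
  refine ⟨fun i hi => ?_, fun i j h2 hj => ?_, fun i j hij hj => ?_⟩
  · have := h.adj (a + i) (by omega)
    rwa [show a + i + 1 = a + (i + 1) by omega] at this
  · exact h.nadj (a + i) (a + j) (by omega) (by omega)
  · exact h.ne (a + i) (a + j) (by omega) (by omega)

lemma NicePath.rev {k : ℕ} {p : ℕ → V} (h : NicePath G k p) :
    NicePath G k (fun l => p (k - l)) := by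
  refine ⟨fun i hi => ?_, fun i j h2 hj => ?_, fun i j hij hj => ?_⟩
  · have := h.adj (k - i - 1) (by omega)
    rw [show k - i - 1 + 1 = k - i by omega] at this
    rw [show k - (i + 1) = k - i - 1 by omega]
    exact this.symm
  · intro hadj
    exact h.nadj (k - j) (k - i) (by omega) (by omega) hadj.symm
  · intro heq
    exact h.ne (k - j) (k - i) (by omega) (by omega) heq.symm

lemma NicePath.concat {k1 : ℕ} {p1 : ℕ → V} {k2 : ℕ} {p2 : ℕ → V}
    (h1 : NicePath G k1 p1) (h2 : NicePath G k2 p2) (hjoin : G.Adj (p1 k1) (p2 0))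
    (hcross : ∀ i ≤ k1, ∀ j ≤ k2, ¬(i = k1 ∧ j = 0) → ¬ G.Adj (p1 i) (p2 j))
    (hnecross : ∀ i ≤ k1, ∀ j ≤ k2, p1 i ≠ p2 j) :
    NicePath G (k1 + k2 + 1) (fun l => if l ≤ k1 then p1 l else p2 (l - k1 - 1)) := by
  refine ⟨fun i hi => ?_, fun i j hij hj => ?_, fun i j hij hj => ?_⟩
  · by_cases ha : i + 1 ≤ k1
    · simp only [show i ≤ k1 by omega, ha, if_true]
      exact h1.adj i (by omega)
    · by_cases hb : i ≤ k1
      · have : i = k1 := by omega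
        simp only [hb, ha, if_true, if_false]
        subst this
        rw [show i + 1 - i - 1 = 0 by omega]
        exact hjoin
      · simp only [ha, hb, if_false]
        have := h2.adj (i - k1 - 1) (by omega)
        rwa [show i + 1 - k1 - 1 = i - k1 - 1 + 1 by omega]
  · by_cases ha : j ≤ k1
    · simp only [show i ≤ k1 by omega, ha, if_true]
      exact h1.nadj i j hij (by omega)
    · by_cases hb : i ≤ k1
      · simp only [ha, hb, if_true, if_false]
        refine hcross i (by omega) (j - k1 - 1) (by omega) ?_
        rintro ⟨rfl, hj0⟩
        omega
      · simp only [ha, hb, if_false]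
        exact h2.nadj (i - k1 - 1) (j - k1 - 1) (by omega) (by omega)
  · by_cases ha : j ≤ k1
    · simp only [show i ≤ k1 by omega, ha, if_true]
      exact h1.ne i j hij (by omega)
    · by_cases hb : i ≤ k1
      · simp only [ha, hb, if_true, if_false]
        exact hnecross i (by omega) (j - k1 - 1) (by omega)
      · simp only [ha, hb, if_false]
        exact h2.ne (i - k1 - 1) (j - k1 - 1) (by omega) (by omega)

section Order

variable {PO : PartialOrder V}

def dualPO (P : PartialOrder V) : PartialOrder V where
  le a b := P.le b a
  lt a b := P.lt b a
  le_refl a := P.le_refl a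
  le_trans a b c h1 h2 := P.le_trans c b a h2 h1
  lt_iff_le_not_ge a b := P.lt_iff_le_not_ge b a
  le_antisymm a b h1 h2 := P.le_antisymm a b h2 h1

variable (hPO : ∀ u v : V, u ≠ v → (G.Adj u v ↔ ¬ (PO.le u v ∨ PO.le v u)))
include hPO

lemma adj_nle {u v : V} (h : G.Adj u v) : ¬ PO.le u v :=
  fun hle => (hPO u v h.ne).mp h (Or.inl hle)

lemma adj_nle' {u v : V} (h : G.Adj u v) : ¬ PO.le v u :=
  fun hle => (hPO u v h.ne).mp h (Or.inr hle)

lemma le_or_le {u v : V} (hne : u ≠ v) (h : ¬ G.Adj u v) : PO.le u v ∨ PO.le v u := by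
  by_contra hc; exact h ((hPO u v hne).mpr hc)

lemma fan_aux {k : ℕ} {p : ℕ → V} {z : V} (hnp : NicePath G k p) (hk : 3 ≤ k)
    (hz0 : G.Adj z (p 0)) (hzk : G.Adj z (p k))
    (hzint : ∀ i, 1 ≤ i → i + 1 ≤ k → ¬ G.Adj z (p i) ∧ z ≠ p i)
    (hle : PO.le z (p 1)) : False := by
  have ch1 : ∀ i, 1 ≤ i → i + 1 ≤ k → PO.le z (p i) := by
    intro i
    induction i with
    | zero => omega
    | succ n ih =>
      intro h1 h2
      by_cases hn0 : n = 0
      · subst hn0; exact hle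
      · have hn : PO.le z (p n) := ih (by omega) (by omega)
        have hne := (hzint (n + 1) (by omega) (by omega)).2
        have hnadj := (hzint (n + 1) (by omega) (by omega)).1
        rcases le_or_le hPO hne hnadj with h' | h'
        · exact h'
        · exact absurd (PO.le_trans _ _ _ h' hn) (adj_nle' hPO (hnp.adj n (by omega)))
  have ch2 : ∀ j, 2 ≤ j → j + 1 ≤ k → PO.le (p 0) (p j) := by
    intro j h2 hj
    have hnadj : ¬ G.Adj (p 0) (p j) := hnp.nadj 0 j (by omega) (by omega)
    have hne : p 0 ≠ p j := hnp.ne 0 j (by omega) (by omega)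
    rcases le_or_le hPO hne hnadj with h | h
    · exact h
    · exact absurd (PO.le_trans _ _ _ (ch1 j (by omega) (by omega)) h) (adj_nle hPO hz0)
  have hnadj0k : ¬ G.Adj (p 0) (p k) := hnp.nadj 0 k (by omega) le_rfl
  have hne0k : p 0 ≠ p k := hnp.ne 0 k (by omega) le_rfl
  rcases le_or_le hPO hne0k hnadj0k with h | h
  · have hnadj1k : ¬ G.Adj (p 1) (p k) := hnp.nadj 1 k (by omega) le_rfl
    have hne1k : p 1 ≠ p k := hnp.ne 1 k (by omega) le_rfl
    rcases le_or_le hPO hne1k hnadj1k with h' | h'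
    · exact absurd (PO.le_trans _ _ _ hle h') (adj_nle hPO hzk)
    · exact absurd (PO.le_trans _ _ _ h h') (adj_nle hPO (hnp.adj 0 (by omega)))
  · have h2 := ch2 (k - 1) (by omega) (by omega)
    have hadj := hnp.adj (k - 1) (by omega)
    rw [show k - 1 + 1 = k by omega] at hadj
    exact absurd (PO.le_trans _ _ _ h h2) (adj_nle' hPO hadj)

lemma fan {k : ℕ} {p : ℕ → V} {z : V} (hnp : NicePath G k p) (hk : 3 ≤ k)
    (hz0 : G.Adj z (p 0)) (hzk : G.Adj z (p k))
    (hzint : ∀ i, 1 ≤ i → i + 1 ≤ k → ¬ G.Adj z (p i) ∧ z ≠ p i) : False := by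
  obtain ⟨h1, h2⟩ := hzint 1 le_rfl (by omega)
  rcases le_or_le hPO h2 h1 with h | h
  · exact fan_aux hPO hnp hk hz0 hzk hzint h
  · exact fan_aux (PO := dualPO PO)
      (fun u v hne => (hPO u v hne).trans (not_congr or_comm)) hnp hk hz0 hzk hzint h

end Order

section Branch

variable {Pp : Set (Set V)} {PO : PartialOrder V}

lemma bp_disj (hBP : IsBranchPartition G Pp) {B B' : Set V} (hB : B ∈ Pp) (hB' : B' ∈ Pp)
    (hne : B ≠ B') {v : V} (hv : v ∈ B) (hv' : v ∈ B') : False :=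
  Set.disjoint_left.mp (hBP.2.1 B hB B' hB' hne) hv hv'

lemma bp_ne (hBP : IsBranchPartition G Pp) {B B' : Set V} (hB : B ∈ Pp) (hB' : B' ∈ Pp)
    (hne : B ≠ B') {v w : V} (hv : v ∈ B) (hw : w ∈ B') : v ≠ w :=
  fun h => bp_disj hBP hB hB' hne (h ▸ hv) hw

lemma dd_kill (hBP : IsBranchPartition G Pp) {x y : V} {Bx By : Set V} (hBx : Bx ∈ Pp)
    (hBy : By ∈ Pp) (hne : Bx ≠ By) (hx : x ∈ Bx) (hy : y ∈ By)
    (hdia : IsDiamondDiagonal G x y) : False :=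
  bp_disj hBP hBy hBx hne.symm hy (hBP.2.2.2.2.1 x y hdia Bx hBx hx)

lemma c4_kill (hBP : IsBranchPartition G Pp) {a b c d : V} (h4 : IsInducedC4 G a b c d)
    {B : Set V} (hB : B ∈ Pp) {x y : V} (hx : x ∈ ({a, b, c, d} : Set V))
    (hy : y ∈ ({a, b, c, d} : Set V)) (hxy : x ≠ y) (hxB : x ∈ B) (hyB : y ∈ B) : False :=
  hBP.2.2.2.2.2 a b c d h4 B hB x hx y hy hxy hxB hyB

variable (hPO : ∀ u v : V, u ≠ v → (G.Adj u v ↔ ¬ (PO.le u v ∨ PO.le v u)))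
variable (hBP : IsBranchPartition G Pp)

include hPO hBP in
/-- The common-neighbor lemma: a vertex of one part cannot have two non-adjacent
neighbors in another (connected) part. -/
lemma L1 : ∀ Bi ∈ Pp, ∀ Bj ∈ Pp, Bi ≠ Bj → ∀ y ∈ Bj, ∀ x ∈ Bi, ∀ x' ∈ Bi,
    G.Adj y x → G.Adj y x' → x ≠ x' → G.Adj x x' := by
  by_contra hcon
  push_neg at hcon
  obtain ⟨Bi0, hBi0, Bj0, hBj0, hne0, y0, hy0, x0, hx0, x0', hx0', hyx0, hyx0', hxx0, hnadj0⟩ :=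
    hcon
  have hex : ∃ k, ∃ Bi, Bi ∈ Pp ∧ ∃ Bj, Bj ∈ Pp ∧ Bi ≠ Bj ∧
      ∃ y, y ∈ Bj ∧ ∃ a b qq, IPath G Bi a b k qq ∧ a ∈ Bi ∧ b ∈ Bi ∧
        G.Adj y a ∧ G.Adj y b ∧ a ≠ b ∧ ¬ G.Adj a b := by
    obtain ⟨k, qq, hq⟩ := ipath_exists (hBP.2.2.2.1 Bi0 hBi0) hx0 hx0'
    exact ⟨k, Bi0, hBi0, Bj0, hBj0, hne0, y0, hy0, x0, x0', qq, hq, hx0, hx0', hyx0, hyx0',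
      hxx0, hnadj0⟩
  obtain ⟨k, hk, hmin⟩ := exists_min hex
  obtain ⟨Bi, hBi, Bj, hBj, hne, y, hy, a, b, q, hq, haBi, hbBi, hya, hyb, hab, hnab⟩ := hk
  obtain ⟨ha0, hbk, hmemq, hadjq⟩ := hq
  subst ha0; subst hbk
  have hq' : IPath G Bi (q 0) (q k) k q := ⟨rfl, rfl, hmemq, hadjq⟩
  have hk2 : 2 ≤ k := by
    rcases Nat.lt_or_ge k 2 with h | h
    · interval_cases k
      · exact absurd rfl hab
      · exact absurd (hadjq 0 (by omega)) hnab
    · exact h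
  have nq : NicePath G k q := by
    refine nice_of_min hq' (fun k' q' hp' => hmin k' ?_)
    exact ⟨Bi, hBi, Bj, hBj, hne, y, hy, q 0, q k, q', hp', haBi, hbBi, hya, hyb, hab, hnab⟩
  have htex : ∃ i, 1 ≤ i ∧ i ≤ k ∧ G.Adj y (q i) := ⟨k, by omega, le_rfl, hyb⟩
  obtain ⟨t, ⟨ht1, htk, hadjt⟩, htmin⟩ := exists_min htex
  have hnadjlt : ∀ i, 1 ≤ i → i < t → ¬ G.Adj y (q i) := fun i h1 hit hadj =>
    absurd (htmin i ⟨h1, by omega, hadj⟩) (by omega)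
  have hneyq : ∀ i ≤ k, y ≠ q i := fun i hik => bp_ne hBP hBj hBi hne.symm hy (hmemq i hik)
  rcases Nat.lt_or_ge (t + 1) k with htlt | htge
  · -- t + 2 ≤ k : descend with suffix
    refine absurd (hmin (k - t) ⟨Bi, hBi, Bj, hBj, hne, y, hy, q t, q k, _,
      ipath_suffix hq' (by omega), hmemq t (by omega), hmemq k le_rfl, hadjt, hyb,
      nq.ne t k (by omega) le_rfl, nq.nadj t k (by omega) le_rfl⟩) (by omega)
  rcases Nat.lt_or_ge t k with htlt2 | htge2
  · -- t = k - 1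
    have htk1 : t + 1 = k := by omega
    rcases Nat.lt_or_ge k 3 with hk3 | hk3
    · -- k = 2, t = 1 : diamond (q 1, y)
      have ht' : t = 1 := by omega
      subst ht'
      have hkk : k = 2 := by omega
      subst hkk
      have dia : IsDiamondDiagonal G (q 1) y :=
        ⟨hadjt.symm, q 0, q 2, nq.ne 0 2 (by omega) (by omega), nq.ne 0 1 (by omega) (by omega),
          (hneyq 0 (by omega)).symm, (nq.ne 1 2 (by omega) (by omega)).symm,
          (hneyq 2 (by omega)).symm, nq.nadj 0 2 (by omega) (by omega),
          nq.adj 0 (by omega), hya.symm, (nq.adj 1 (by omega)).symm, hyb.symm⟩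
      exact dd_kill hBP hBi hBj hne (hmemq 1 (by omega)) hy dia
    · -- k ≥ 3 : descend with prefix
      refine absurd (hmin t ⟨Bi, hBi, Bj, hBj, hne, y, hy, q 0, q t, q,
        ipath_prefix hq' (by omega), hmemq 0 (by omega), hmemq t (by omega), hya, hadjt,
        nq.ne 0 t (by omega) (by omega), nq.nadj 0 t (by omega) (by omega)⟩) (by omega)
  · -- t = k
    have htkk : t = k := by omega
    rw [htkk] at hnadjlt
    rcases Nat.lt_or_ge k 3 with hk3 | hk3
    · -- k = 2 : induced C4 (q0, q1, q2, y)
      have hkk : k = 2 := by omega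
      subst hkk
      have h4 : IsInducedC4 G (q 0) (q 1) (q 2) y :=
        ⟨nq.ne 0 1 (by omega) (by omega), nq.ne 0 2 (by omega) (by omega),
          (hneyq 0 (by omega)).symm,
          nq.ne 1 2 (by omega) (by omega), (hneyq 1 (by omega)).symm, (hneyq 2 (by omega)).symm,
          nq.adj 0 (by omega), nq.adj 1 (by omega), hyb.symm, hya,
          nq.nadj 0 2 (by omega) (by omega),
          fun hadj => hnadjlt 1 (by omega) (by omega) hadj.symm⟩
      exact c4_kill hBP h4 hBi (by simp : q 0 ∈ ({q 0, q 1, q 2, y} : Set V))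
        (by simp : q 1 ∈ ({q 0, q 1, q 2, y} : Set V)) (nq.ne 0 1 (by omega) (by omega))
        (hmemq 0 (by omega)) (hmemq 1 (by omega))
    · -- k ≥ 3 : fan
      exact fan hPO nq hk3 hya hyb
        (fun i h1 hik => ⟨hnadjlt i h1 (by omega), hneyq i (by omega)⟩)

include hPO hBP in
lemma window {Bi Bj : Set V} (hBi : Bi ∈ Pp) (hBj : Bj ∈ Pp) (hne : Bi ≠ Bj)
    {v : V} (hv : v ∈ Bi) {m : ℕ} {r : ℕ → V} (hmem : ∀ i ≤ m, r i ∈ Bj)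
    (hnr : NicePath G m r) {i j : ℕ} (hi : G.Adj v (r i)) (hj : G.Adj v (r j))
    (hij : i ≤ j) (hjm : j ≤ m) : j ≤ i + 1 := by
  by_contra hc
  exact hnr.nadj i j (by omega) hjm
    (L1 hPO hBP Bj hBj Bi hBi hne.symm v hv (r i) (hmem i (by omega)) (r j) (hmem j hjm)
      hi hj (hnr.ne i j (by omega) hjm))

end Branch


section T3sec

variable {Pp : Set (Set V)} {PO : PartialOrder V}

lemma NicePath.pair {u v : V} (h : G.Adj u v) :
    NicePath G 1 (fun l => if l = 0 then u else v) := by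
  refine ⟨fun i hi => ?_, fun i j h2 hj => by omega, fun i j hij hj => ?_⟩
  · have : i = 0 := by omega
    simp [this, h]
  · have : i = 0 ∧ j = 1 := by omega
    simp [this.1, this.2, h.ne]

lemma NicePath.take {m : ℕ} {r : ℕ → V} (h : NicePath G m r) {t : ℕ} (ht : t ≤ m) :
    NicePath G t r :=
  ⟨fun i hi => h.adj i (by omega), fun i j h2 hj => h.nadj i j h2 (by omega),
    fun i j hij hj => h.ne i j hij (by omega)⟩

/-- A "bad configuration" for the complete-adjacency lemma between connectors of two
adjacent parts. -/
def T3Cfg (G : SimpleGraph V) (Pp : Set (Set V)) (n : ℕ) : Prop :=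
  ∃ Bi, Bi ∈ Pp ∧ ∃ Bj, Bj ∈ Pp ∧ Bi ≠ Bj ∧ ∃ x x' y y' : V, ∃ k m : ℕ, ∃ q r : ℕ → V,
    x ∈ Bi ∧ x' ∈ Bi ∧ y ∈ Bj ∧ y' ∈ Bj ∧
    IPath G Bi x x' k q ∧ IPath G Bj y y' m r ∧
    G.Adj x y ∧ G.Adj x' y' ∧ ¬ G.Adj x y' ∧ ¬ G.Adj x' y ∧ n = k + m

lemma T3Cfg.mk' {Bi Bj : Set V} {x x' y y' : V} {k m : ℕ} {q r : ℕ → V}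
    (hBi : Bi ∈ Pp) (hBj : Bj ∈ Pp) (hne : Bi ≠ Bj) (hx : x ∈ Bi) (hx' : x' ∈ Bi)
    (hy : y ∈ Bj) (hy' : y' ∈ Bj) (hq : IPath G Bi x x' k q) (hr : IPath G Bj y y' m r)
    (hxy : G.Adj x y) (hx'y' : G.Adj x' y') (hnxy' : ¬ G.Adj x y') (hnx'y : ¬ G.Adj x' y) :
    T3Cfg G Pp (k + m) :=
  ⟨Bi, hBi, Bj, hBj, hne, x, x', y, y', k, m, q, r, hx, hx', hy, hy', hq, hr, hxy, hx'y',
    hnxy', hnx'y, rfl⟩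

variable (hPO : ∀ u v : V, u ≠ v → (G.Adj u v ↔ ¬ (PO.le u v ∨ PO.le v u)))
variable (hBP : IsBranchPartition G Pp)

include hPO hBP in
lemma T3core {Bi Bj : Set V} {x x' y y' : V} {k m n : ℕ} {q r : ℕ → V}
    (hBi : Bi ∈ Pp) (hBj : Bj ∈ Pp) (hne : Bi ≠ Bj) (hx : x ∈ Bi) (hx' : x' ∈ Bi)
    (hy : y ∈ Bj) (hy' : y' ∈ Bj) (hq : IPath G Bi x x' k q) (hr : IPath G Bj y y' m r)
    (hxy : G.Adj x y) (hx'y' : G.Adj x' y') (hnxy' : ¬ G.Adj x y') (hnx'y : ¬ G.Adj x' y)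
    (hn : n = k + m) (hmin : ∀ n', T3Cfg G Pp n' → n ≤ n') (hm2 : 2 ≤ m) : False := by
  obtain ⟨hq0, hqk, hmemq, hadjq⟩ := hq
  obtain ⟨hr0, hrm, hmemr, hadjr⟩ := hr
  subst hq0 hqk hr0 hrm hn
  have hq' : IPath G Bi (q 0) (q k) k q := ⟨rfl, rfl, hmemq, hadjq⟩
  have hr' : IPath G Bj (r 0) (r m) m r := ⟨rfl, rfl, hmemr, hadjr⟩
  have hxx'ne : q 0 ≠ q k := fun h => hnx'y (h ▸ hxy)
  have hyy'ne : r 0 ≠ r m := fun h => hnxy' (h ▸ hxy)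
  have hk1 : 1 ≤ k := by
    rcases Nat.eq_zero_or_pos k with h | h
    · exact absurd (h ▸ rfl) hxx'ne
    · omega
  have nq : NicePath G k q := by
    refine nice_of_min hq' (fun k' q' hp' => ?_)
    have := hmin (k' + m) (T3Cfg.mk' hBi hBj hne hx hx' hy hy' hp' hr' hxy hx'y' hnxy' hnx'y)
    omega
  have nr : NicePath G m r := by
    refine nice_of_min hr' (fun m' r' hp' => ?_)
    have := hmin (k + m') (T3Cfg.mk' hBi hBj hne hx hx' hy hy' hq' hp' hxy hx'y' hnxy' hnx'y)
    omega
  have hnyy' : ¬ G.Adj (r 0) (r m) := by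
    intro hadj
    have := hmin (k + 1) (T3Cfg.mk' hBi hBj hne hx hx' hy hy' hq' (ipath_edge hadj hy hy')
      hxy hx'y' hnxy' hnx'y)
    omega
  have xw : ∀ b, b ≤ m → G.Adj (q 0) (r b) → b ≤ 1 := fun b hbm hadj =>
    window hPO hBP hBi hBj hne hx hmemr nr hxy hadj (Nat.zero_le b) hbm
  have x'w : ∀ b, b ≤ m → G.Adj (q k) (r b) → m - 1 ≤ b := fun b hbm hadj => by
    have := window hPO hBP hBi hBj hne hx' hmemr nr hadj hx'y' hbm le_rfl
    omega
  by_cases hxr1 : G.Adj (q 0) (r 1)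
  · by_cases hx'r1 : G.Adj (q k) (r 1)
    · -- diamond on the edge (q 0, r 1)
      have hxx' : G.Adj (q 0) (q k) :=
        L1 hPO hBP Bi hBi Bj hBj hne (r 1) (hmemr 1 (by omega)) (q 0) hx (q k) hx'
          hxr1.symm hx'r1.symm hxx'ne
      have dia : IsDiamondDiagonal G (q 0) (r 1) :=
        ⟨hxr1, r 0, q k, bp_ne hBP hBj hBi hne.symm hy hx', bp_ne hBP hBj hBi hne.symm hy hx,
          nr.ne 0 1 (by omega) (by omega), hxx'ne.symm,
          bp_ne hBP hBi hBj hne hx' (hmemr 1 (by omega)),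
          fun h => hnx'y h.symm, hxy.symm, nr.adj 0 (by omega), hxx'.symm, hx'r1⟩
      exact dd_kill hBP hBi hBj hne hx (hmemr 1 (by omega)) dia
    · -- descend, replacing y by r 1
      have := hmin (k + (m - 1)) (T3Cfg.mk' hBi hBj hne hx hx' (hmemr 1 (by omega)) hy' hq'
        (ipath_suffix hr' (by omega)) hxr1 hx'y' hnxy' hx'r1)
      omega
  · by_cases hx'rm1 : G.Adj (q k) (r (m - 1))
    · -- descend, replacing y' by r (m-1)
      have hnxrm1 : ¬ G.Adj (q 0) (r (m - 1)) := by
        intro h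
        have := xw (m - 1) (by omega) h
        have hm1 : m - 1 = 1 := by omega
        exact hxr1 (hm1 ▸ h)
      have := hmin (k + (m - 1)) (T3Cfg.mk' hBi hBj hne hx hx' hy (hmemr (m - 1) (by omega))
        hq' (ipath_prefix hr' (by omega)) hxy hx'rm1 hnxrm1 hnx'y)
      omega
    · -- x is adjacent only to r 0, and x' only to r m, along the r-path
      have hxro : ∀ b, b ≤ m → 1 ≤ b → ¬ G.Adj (q 0) (r b) := by
        intro b hbm h1 hadj
        have := xw b hbm hadj
        have hb1 : b = 1 := by omega
        exact hxr1 (hb1 ▸ hadj)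
      have hx'ro : ∀ b, b < m → ¬ G.Adj (q k) (r b) := by
        intro b hbm hadj
        have := x'w b (by omega) hadj
        have hb : b = m - 1 := by omega
        exact hx'rm1 (hb ▸ hadj)
      rcases Nat.lt_or_ge k 2 with hklt | hk2
      · -- k = 1 : fan through the path x', x, r 0, ..., r (m-1) with apex y' = r m
        have hk1' : k = 1 := by omega
        have hxx' : G.Adj (q 0) (q k) := by
          have := hadjq 0 (by omega); rwa [hk1']
        have np := NicePath.concat (G := G) (NicePath.pair hxx'.symm) (nr.take (m := m)
          (show m - 1 ≤ m by omega)) ?_ ?_ ?_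
        rotate_left
        · -- join : Adj (pair 1) (r 0)
          simpa using hxy
        · -- cross non-adjacency
          intro i hi j hj hnotjoin
          rcases Nat.eq_zero_or_pos i with h0 | h0
          · subst h0
            simpa using hx'ro j (by omega)
          · have hi1 : i = 1 := by omega
            subst hi1
            have hj1 : 1 ≤ j := by
              rcases Nat.eq_zero_or_pos j with h | h
              · exfalso; exact hnotjoin ⟨rfl, h⟩
              · omega
            simpa using hxro j (by omega) hj1
        · -- cross distinctness
          intro i hi j hj
          by_cases h0 : i = 0 <;>
            simp [h0, bp_ne hBP hBi hBj hne hx' (hmemr j (by omega)),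
              bp_ne hBP hBi hBj hne hx (hmemr j (by omega))]
        · refine fan hPO (z := r m) np (by omega) ?_ ?_ ?_
          · simpa using hx'y'.symm
          · have : ¬ (1 + (m - 1) + 1 ≤ 1) := by omega
            simp only [this, if_false]
            rw [show 1 + (m - 1) + 1 - 1 - 1 = m - 1 by omega]
            have := (hadjr (m - 1) (by omega)).symm
            rwa [show m - 1 + 1 = m by omega] at this
          · intro i h1 hiK
            by_cases hi1 : i ≤ 1
            · have : i = 1 := by omega
              subst this
              refine ⟨by simpa using fun h => hnxy' h.symm, ?_⟩
              simpa using (bp_ne hBP hBi hBj hne hx hy').symm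
            · simp only [hi1, if_false]
              constructor
              · intro hadj
                exact nr.nadj (i - 1 - 1) m (by omega) le_rfl hadj.symm
              · exact (nr.ne (i - 1 - 1) m (by omega) le_rfl).symm
      · -- k ≥ 2
        have hnxx' : ¬ G.Adj (q 0) (q k) := by
          intro hadj
          have := hmin (1 + m) (T3Cfg.mk' hBi hBj hne hx hx' hy hy'
            (ipath_edge hadj hx hx') hr' hxy hx'y' hnxy' hnx'y)
          omega
        have yw : ∀ a, a ≤ k → G.Adj (r 0) (q a) → a ≤ 1 := fun a ham hadj =>
          window hPO hBP hBj hBi hne.symm hy hmemq nq hxy.symm hadj (Nat.zero_le a) ham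
        have y'w : ∀ a, a ≤ k → G.Adj (r m) (q a) → k - 1 ≤ a := fun a ham hadj => by
          have := window hPO hBP hBj hBi hne.symm hy' hmemq nq hadj hx'y'.symm ham le_rfl
          omega
        by_cases hy'qk1 : G.Adj (r m) (q (k - 1))
        · by_cases hyqk1 : G.Adj (r 0) (q (k - 1))
          · have hkk : k - 1 ≤ 1 := yw (k - 1) (by omega) hyqk1
            have : G.Adj (r 0) (r m) :=
              L1 hPO hBP Bj hBj Bi hBi hne.symm (q (k - 1)) (hmemq (k - 1) (by omega))
                (r 0) hy (r m) hy' hyqk1.symm hy'qk1.symm hyy'ne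
            exact hnyy' this
          · have := hmin ((k - 1) + m) (T3Cfg.mk' hBi hBj hne hx (hmemq (k - 1) (by omega))
              hy hy' (ipath_prefix hq' (by omega)) hr' hxy hy'qk1.symm hnxy'
              (fun h => hyqk1 h.symm))
            omega
        · have hy'o : ∀ a, a < k → ¬ G.Adj (r m) (q a) := by
            intro a ha hadj
            have := y'w a (by omega) hadj
            have hb : a = k - 1 := by omega
            exact hy'qk1 (hb ▸ hadj)
          by_cases hcr : ∃ a b, 1 ≤ a ∧ a + 1 ≤ k ∧ 1 ≤ b ∧ b + 1 ≤ m ∧ G.Adj (q a) (r b)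
          · obtain ⟨a, b, ha1, hak, hb1, hbm, hab⟩ := hcr
            have := hmin ((k - a) + (m - b)) (T3Cfg.mk' hBi hBj hne (hmemq a (by omega)) hx'
              (hmemr b (by omega)) hy' (ipath_suffix hq' (by omega))
              (ipath_suffix hr' (by omega)) hab hx'y'
              (fun h => hy'o a (by omega) h.symm) (hx'ro b (by omega)))
            omega
          · push_neg at hcr
            by_cases hyq1 : G.Adj (r 0) (q 1)
            · -- fan through q k, ..., q 1, r 0, ..., r (m-1), apex y' = r m
              have np := NicePath.concat (G := G) ((nq.rev).take (t := k - 1) (by omega))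
                (nr.take (show m - 1 ≤ m by omega)) ?_ ?_ ?_
              rotate_left
              · show G.Adj (q (k - (k - 1))) (r 0)
                rw [show k - (k - 1) = 1 by omega]
                exact hyq1.symm
              · intro i hi j hj hnotjoin
                show ¬ G.Adj (q (k - i)) (r j)
                rcases Nat.eq_zero_or_pos i with h0 | h0
                · subst h0
                  rw [Nat.sub_zero]
                  exact hx'ro j (by omega)
                · rcases Nat.eq_zero_or_pos j with hj0 | hj0
                  · subst hj0
                    intro hadj
                    have := yw (k - i) (by omega) hadj.symm
                    omega
                  · exact hcr (k - i) j (by omega) (by omega) (by omega) (by omega)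
              · intro i hi j hj
                exact bp_ne hBP hBi hBj hne (hmemq (k - i) (by omega)) (hmemr j (by omega))
              · refine fan hPO (z := r m) np (by omega) ?_ ?_ ?_
                · have h0 : (0 : ℕ) ≤ k - 1 := by omega
                  simp only [h0, if_true]
                  show G.Adj (r m) (q (k - 0))
                  rw [Nat.sub_zero]
                  exact hx'y'.symm
                · have hK : ¬ (k - 1 + (m - 1) + 1 ≤ k - 1) := by omega
                  simp only [hK, if_false]
                  rw [show k - 1 + (m - 1) + 1 - (k - 1) - 1 = m - 1 by omega]
                  have := (hadjr (m - 1) (by omega)).symm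
                  rwa [show m - 1 + 1 = m by omega] at this
                · intro i h1 hiK
                  by_cases hik : i ≤ k - 1
                  · simp only [hik, if_true]
                    show ¬ G.Adj (r m) (q (k - i)) ∧ r m ≠ q (k - i)
                    exact ⟨hy'o (k - i) (by omega),
                      bp_ne hBP hBj hBi hne.symm hy' (hmemq (k - i) (by omega))⟩
                  · simp only [hik, if_false]
                    refine ⟨fun hadj => nr.nadj (i - (k - 1) - 1) m (by omega) le_rfl hadj.symm,
                      (nr.ne (i - (k - 1) - 1) m (by omega) le_rfl).symm⟩
            · -- fan through q k, ..., q 0, r 0, ..., r (m-1), apex y' = r m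
              have np := NicePath.concat (G := G) (nq.rev)
                (nr.take (show m - 1 ≤ m by omega)) ?_ ?_ ?_
              rotate_left
              · show G.Adj (q (k - k)) (r 0)
                rw [Nat.sub_self]
                exact hxy
              · intro i hi j hj hnotjoin
                show ¬ G.Adj (q (k - i)) (r j)
                rcases Nat.eq_zero_or_pos i with h0 | h0
                · subst h0
                  rw [Nat.sub_zero]
                  exact hx'ro j (by omega)
                · rcases Nat.eq_zero_or_pos j with hj0 | hj0
                  · subst hj0
                    intro hadj
                    have := yw (k - i) (by omega) hadj.symm
                    have hki : k - i = 1 ∨ k - i = 0 := by omega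
                    rcases hki with h | h
                    · rw [h] at hadj; exact hyq1 hadj.symm
                    · exact hnotjoin ⟨by omega, rfl⟩
                  · rcases Nat.lt_or_ge i k with hik | hik
                    · exact hcr (k - i) j (by omega) (by omega) (by omega) (by omega)
                    · intro hadj
                      rw [show k - i = 0 by omega] at hadj
                      exact hxro j (by omega) (by omega) hadj
              · intro i hi j hj
                exact bp_ne hBP hBi hBj hne (hmemq (k - i) (by omega)) (hmemr j (by omega))
              · refine fan hPO (z := r m) np (by omega) ?_ ?_ ?_
                · have h0 : (0 : ℕ) ≤ k := by omega
                  simp only [h0, if_true]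
                  show G.Adj (r m) (q (k - 0))
                  rw [Nat.sub_zero]
                  exact hx'y'.symm
                · have hK : ¬ (k + (m - 1) + 1 ≤ k) := by omega
                  simp only [hK, if_false]
                  rw [show k + (m - 1) + 1 - k - 1 = m - 1 by omega]
                  have := (hadjr (m - 1) (by omega)).symm
                  rwa [show m - 1 + 1 = m by omega] at this
                · intro i h1 hiK
                  by_cases hik : i ≤ k
                  · simp only [hik, if_true]
                    show ¬ G.Adj (r m) (q (k - i)) ∧ r m ≠ q (k - i)
                    refine ⟨?_, bp_ne hBP hBj hBi hne.symm hy' (hmemq (k - i) (by omega))⟩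
                    exact hy'o (k - i) (by omega)
                  · simp only [hik, if_false]
                    refine ⟨fun hadj => nr.nadj (i - k - 1) m (by omega) le_rfl hadj.symm,
                      (nr.ne (i - k - 1) m (by omega) le_rfl).symm⟩

include hPO hBP in
/-- Complete adjacency between connectors of two adjacent parts. -/
lemma T3 : ∀ Bi ∈ Pp, ∀ Bj ∈ Pp, Bi ≠ Bj → ∀ x ∈ Bi, ∀ y ∈ Bj, ∀ x' ∈ Bi, ∀ y' ∈ Bj,
    G.Adj x y → G.Adj x' y' → G.Adj x y' := by
  intro Bi hBi Bj hBj hne x hx y hy x' hx' y' hy' hxy hx'y'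
  by_contra hnxy'
  have hxx'ne : x ≠ x' := fun h => hnxy' (h ▸ hx'y')
  have hyy'ne : y ≠ y' := fun h => hnxy' (h ▸ hxy)
  by_cases hA : G.Adj x' y
  · -- diamond on the edge (x', y)
    have hxx' : G.Adj x x' :=
      L1 hPO hBP Bi hBi Bj hBj hne y hy x hx x' hx' hxy.symm hA.symm hxx'ne
    have hyy' : G.Adj y y' :=
      L1 hPO hBP Bj hBj Bi hBi hne.symm x' hx' y hy y' hy' hA hx'y' hyy'ne
    have dia : IsDiamondDiagonal G x' y :=
      ⟨hA, x, y', bp_ne hBP hBi hBj hne hx hy', hxx'ne, bp_ne hBP hBi hBj hne hx hy,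
        bp_ne hBP hBj hBi hne.symm hy' hx', hyy'ne.symm, hnxy', hxx', hxy,
        hx'y'.symm, hyy'.symm⟩
    exact dd_kill hBP hBi hBj hne hx' hy dia
  · obtain ⟨k0, q0, hq0⟩ := ipath_exists (hBP.2.2.2.1 Bi hBi) hx hx'
    obtain ⟨m0, r0, hr0⟩ := ipath_exists (hBP.2.2.2.1 Bj hBj) hy hy'
    have hex : ∃ n, T3Cfg G Pp n :=
      ⟨k0 + m0, T3Cfg.mk' hBi hBj hne hx hx' hy hy' hq0 hr0 hxy hx'y' hnxy' hA⟩
    obtain ⟨n, hn, hmin⟩ := exists_min hex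
    obtain ⟨Ci, hCi, Cj, hCj, hneC, a, a', b, b', k, m, q, r, ha, ha', hb, hb', hq, hr,
      hab, ha'b', hnab', hna'b, hnn⟩ := hn
    have habne : a ≠ a' := fun h => hna'b (h ▸ hab)
    have hbbne : b ≠ b' := fun h => hnab' (h ▸ hab)
    have hk1 : 1 ≤ k := by
      rcases Nat.eq_zero_or_pos k with h | h
      · exact absurd (by rw [← hq.1, ← hq.2.1, h]) habne
      · omega
    have hm1 : 1 ≤ m := by
      rcases Nat.eq_zero_or_pos m with h | h
      · exact absurd (by rw [← hr.1, ← hr.2.1, h]) hbbne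
      · omega
    rcases Nat.lt_or_ge m 2 with hm2 | hm2
    · rcases Nat.lt_or_ge k 2 with hk2 | hk2
      · -- k = m = 1 : induced C4 (a, b, b', a')
        have hkk : k = 1 := by omega
        have hmm : m = 1 := by omega
        have hadjaa' : G.Adj a a' := by
          have := hq.2.2.2 0 (by omega)
          rwa [hq.1, show (0:ℕ) + 1 = 1 by rfl, ← hkk, hq.2.1] at this
        have hadjbb' : G.Adj b b' := by
          have := hr.2.2.2 0 (by omega)
          rwa [hr.1, show (0:ℕ) + 1 = 1 by rfl, ← hmm, hr.2.1] at this
        have h4 : IsInducedC4 G a b b' a' :=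
          ⟨bp_ne hBP hCi hCj hneC ha hb, bp_ne hBP hCi hCj hneC ha hb', habne,
            hbbne, bp_ne hBP hCj hCi hneC.symm hb ha', bp_ne hBP hCj hCi hneC.symm hb' ha',
            hab, hadjbb', ha'b'.symm, hadjaa'.symm, hnab', fun h => hna'b h.symm⟩
        exact c4_kill hBP h4 hCi (show a ∈ ({a, b, b', a'} : Set V) by simp)
          (show a' ∈ ({a, b, b', a'} : Set V) by simp) habne ha
          (by rw [← hq.2.1]; exact hq.2.2.1 k le_rfl)
      · -- swap roles
        exact T3core hPO hBP hCj hCi hneC.symm hb hb' ha ha' hr hq hab.symm ha'b'.symm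
          (fun h => hna'b h.symm) (fun h => hnab' h.symm) (by omega) hmin (by omega)
    · exact T3core hPO hBP hCi hCj hneC ha ha' hb hb' hq hr hab ha'b' hnab' hna'b hnn hmin hm2

include hPO hBP in
/-- Each connector set is a clique. -/
lemma T2 : ∀ Bi ∈ Pp, ∀ Bj ∈ Pp, Bi ≠ Bj → ∀ x ∈ Bi, ∀ x' ∈ Bi, ∀ y ∈ Bj, ∀ y' ∈ Bj,
    G.Adj x y → G.Adj x' y' → x ≠ x' → G.Adj x x' := by
  intro Bi hBi Bj hBj hne x hx x' hx' y hy y' hy' hxy hx'y' hxx'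
  have h1 : G.Adj x y' := T3 hPO hBP Bi hBi Bj hBj hne x hx y hy x' hx' y' hy' hxy hx'y'
  exact L1 hPO hBP Bi hBi Bj hBj hne y' hy' x hx x' hx' h1.symm hx'y'.symm hxx'

end T3sec

section Key1

variable {Pp : Set (Set V)} {PO : PartialOrder V}
variable (hPO : ∀ u v : V, u ≠ v → (G.Adj u v ↔ ¬ (PO.le u v ∨ PO.le v u)))
variable (hBP : IsBranchPartition G Pp)

include hPO hBP in
lemma key1 {Bi Bj Bl : Set V} (hBi : Bi ∈ Pp) (hBj : Bj ∈ Pp) (hBl : Bl ∈ Pp)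
    (hij : Bi ≠ Bj) (hil : Bi ≠ Bl) (hjl : Bj ≠ Bl)
    (hPAil : ∃ u ∈ Bi, ∃ v ∈ Bl, G.Adj u v) (hPAjl : ∃ u ∈ Bj, ∃ v ∈ Bl, G.Adj u v) :
    ∀ x ∈ Bi, ∀ y ∈ Bj, G.Adj x y → ∃ z ∈ Bl, G.Adj x z := by
  have main : ∀ n : ℕ, ∀ x ∈ Bi, (∃ y ∈ Bj, G.Adj x y) →
      (∃ c q, IPath G Bi x c n q ∧ ∃ z ∈ Bl, G.Adj c z) → ∃ z ∈ Bl, G.Adj x z := by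
    intro n
    induction n using Nat.strong_induction_on with
    | _ n IH =>
    intro x hx hyex hpathex
    by_contra hno
    push_neg at hno
    -- choose a shortest path in Bi from x to a vertex with a neighbor in Bl
    have hpex : ∃ kk : ℕ, kk ≤ n ∧ ∃ q : ℕ → V,
        IPath G Bi x (q kk) kk q ∧ ∃ z ∈ Bl, G.Adj (q kk) z := by
      obtain ⟨c, q, hq, hc⟩ := hpathex
      exact ⟨n, le_rfl, q, ⟨hq.1, rfl, hq.2.2.1, hq.2.2.2⟩, by rw [hq.2.1]; exact hc⟩
    obtain ⟨k, ⟨hkn, q, hq, z, hzBl, hqkz⟩, hkmin⟩ := exists_min hpex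
    obtain ⟨hq0, -, hmemq, hadjq⟩ := hq
    subst hq0
    have hq' : IPath G Bi (q 0) (q k) k q := ⟨rfl, rfl, hmemq, hadjq⟩
    have hk1 : 1 ≤ k := by
      rcases Nat.eq_zero_or_pos k with h | h
      · exact absurd (h ▸ hqkz) (hno z hzBl)
      · omega
    have nq : NicePath G k q := by
      refine nice_of_min hq' (fun k' q' hp' => ?_)
      rcases le_or_gt k k' with h | h
      · exact h
      · exact absurd (hkmin k' ⟨by omega, q', ⟨hp'.1, rfl, hp'.2.2.1, hp'.2.2.2⟩, z, hzBl,
          by rw [hp'.2.1]; exact hqkz⟩) (by omega)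
    -- no interior vertex of q has a neighbor in Bl (nor does x)
    have hQnoL : ∀ a, a < k → ∀ zz ∈ Bl, ¬ G.Adj (q a) zz := by
      intro a hak zz hzz hadj
      rcases Nat.eq_zero_or_pos a with h | h
      · exact hno zz hzz (h ▸ hadj)
      · have := hkmin a ⟨by omega, q, ipath_prefix hq' (by omega), zz, hzz, hadj⟩
        omega
    -- no interior vertex of q has a neighbor in Bj
    have hIntJ : ∀ a, 1 ≤ a → a < k → ∀ w ∈ Bj, ¬ G.Adj (q a) w := by
      intro a h1 hak w hw hadj
      have : ∃ z ∈ Bl, G.Adj (q a) z := by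
        refine IH (k - a) (by omega) (q a) (hmemq a (by omega)) ⟨w, hw, hadj⟩
          ⟨q k, _, ipath_suffix hq' (by omega), z, hzBl, hqkz⟩
      obtain ⟨zz, hzz, hadjz⟩ := this
      exact hQnoL a hak zz hzz hadjz
    obtain ⟨y, hy, hxy⟩ := hyex
    -- the s-path : shortest path in Bj from y to a vertex with a neighbor in Bl
    have hsex : ∃ dd : ℕ, ∃ ss : ℕ → V,
        IPath G Bj y (ss dd) dd ss ∧ ∃ z ∈ Bl, G.Adj (ss dd) z := by
      obtain ⟨w1, hw1, z1, hz1, hadj1⟩ := hPAjl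
      obtain ⟨d0, s0, hs0⟩ := ipath_exists (hBP.2.2.2.1 Bj hBj) hy hw1
      exact ⟨d0, s0, ⟨hs0.1, rfl, hs0.2.2.1, hs0.2.2.2⟩, z1, hz1, by rw [hs0.2.1]; exact hadj1⟩
    obtain ⟨d, ⟨s, hs, w, hwBl, hsdw⟩, hdmin⟩ := exists_min hsex
    obtain ⟨hs0, -, hmems, hadjs⟩ := hs
    subst hs0
    have hs' : IPath G Bj (s 0) (s d) d s := ⟨rfl, rfl, hmems, hadjs⟩
    have ns : NicePath G d s := by
      refine nice_of_min hs' (fun d' s' hp' => ?_)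
      exact hdmin d' ⟨s', ⟨hp'.1, rfl, hp'.2.2.1, hp'.2.2.2⟩, w, hwBl,
        by rw [hp'.2.1]; exact hsdw⟩
    have hSnoL : ∀ b, b < d → ∀ zz ∈ Bl, ¬ G.Adj (s b) zz := by
      intro b hbd zz hzz hadj
      have := hdmin b ⟨s, ipath_prefix hs' (by omega), zz, hzz, hadj⟩
      omega
    -- vertices of the s-path with a neighbor in Bi are adjacent to x, hence have index ≤ 1
    have hXSw : ∀ b ≤ d, G.Adj (q 0) (s b) → b ≤ 1 := fun b hbd hadj =>
      window hPO hBP hBi hBj hij hx hmems ns hxy hadj (Nat.zero_le b) hbd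
    have hSnoI : ∀ b, 2 ≤ b → b ≤ d → ∀ v ∈ Bi, ¬ G.Adj (s b) v := by
      intro b h2 hbd v hv hadj
      have : G.Adj (q 0) (s b) :=
        T3 hPO hBP Bi hBi Bj hBj hij (q 0) hx (s 0) hy v hv (s b) (hmems b hbd) hxy hadj.symm
      have := hXSw b hbd this
      omega
    -- the r-path : shortest path in Bl from z to w
    have hrex : ∃ nn : ℕ, ∃ rr : ℕ → V, IPath G Bl z w nn rr :=
      ipath_exists (hBP.2.2.2.1 Bl hBl) hzBl hwBl
    have hrex' : ∃ nn : ℕ, ∃ rr : ℕ → V, IPath G Bl z w nn rr := hrex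
    obtain ⟨nr0, r0, hr0⟩ := hrex
    have hrexm : ∃ nn : ℕ, ∃ rr : ℕ → V, IPath G Bl z w nn rr := ⟨nr0, r0, hr0⟩
    obtain ⟨nr, hnr, hnrmin⟩ := exists_min hrexm
    obtain ⟨r, hr⟩ := hnr
    obtain ⟨hr0', hrn, hmemr, hadjr⟩ := hr
    subst hr0'
    have hr' : IPath G Bl (r 0) (r nr) nr r := ⟨rfl, rfl, hmemr, hadjr⟩
    have nrr : NicePath G nr r := by
      refine nice_of_min hr' (fun n' r' hp' => hnrmin n' ⟨r', ?_⟩)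
      rw [← hrn]; exact hp'
    rw [← hrn] at hsdw
    -- windows of q k and s d on the r-path
    have hQKw : ∀ c ≤ nr, G.Adj (q k) (r c) → c ≤ 1 := fun c hcn hadj =>
      window hPO hBP hBi hBl hil (hmemq k le_rfl) hmemr nrr hqkz hadj (Nat.zero_le c) hcn
    have hSDw : ∀ c ≤ nr, G.Adj (s d) (r c) → nr - 1 ≤ c := by
      intro c hcn hadj
      have := window hPO hBP hBj hBl hjl (hmems d le_rfl) hmemr nrr hadj hsdw hcn le_rfl
      omega
    -- middle r-vertices have no neighbors in Bi nor Bj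
    have hRnoI : ∀ c, 2 ≤ c → c ≤ nr → ∀ v ∈ Bi, ¬ G.Adj (r c) v := by
      intro c h2 hcn v hv hadj
      have : G.Adj (r c) (q k) :=
        T3 hPO hBP Bl hBl Bi hBi (fun h => hil h.symm) (r c) (hmemr c hcn) v hv (r 0) hzBl
          (q k) (hmemq k le_rfl) hadj hqkz.symm
      have := hQKw c hcn this.symm
      omega
    have hRnoJ : ∀ c, c + 2 ≤ nr → ∀ v ∈ Bj, ¬ G.Adj (r c) v := by
      intro c h2 v hv hadj
      have : G.Adj (r c) (s d) :=
        T3 hPO hBP Bl hBl Bj hBj (fun h => hjl h.symm) (r c) (hmemr c (by omega)) v hv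
          (r nr) (hmemr nr le_rfl) (s d) (hmems d le_rfl) hadj hsdw.symm
      have := hSDw c (by omega) this.symm
      omega
    -- the entry point e of q k on the r-path
    have hE : ∃ e, e ≤ nr ∧ G.Adj (q k) (r e) ∧
        ∀ c, e < c → c ≤ nr → ¬ G.Adj (q k) (r c) := by
      by_cases he : 1 ≤ nr ∧ G.Adj (q k) (r 1)
      · exact ⟨1, he.1, he.2, fun c hc hcn hadj => by have := hQKw c hcn hadj; omega⟩
      · refine ⟨0, Nat.zero_le nr, hqkz, fun c hc hcn hadj => ?_⟩
        have := hQKw c hcn hadj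
        have hc1 : c = 1 := by omega
        exact he ⟨by omega, hc1 ▸ hadj⟩
    obtain ⟨e, hen, hqkre, hEno⟩ := hE
    -- the exit point f of s d on the r-path
    have hF : ∃ f, e ≤ f ∧ f ≤ nr ∧ G.Adj (s d) (r f) ∧
        ∀ c, e ≤ c → c < f → ¬ G.Adj (s d) (r c) := by
      by_cases hf : e + 1 ≤ nr ∧ G.Adj (s d) (r (nr - 1))
      · refine ⟨nr - 1, by omega, by omega, hf.2, fun c hce hcf hadj => ?_⟩
        have := hSDw c (by omega) hadj
        omega
      · refine ⟨nr, hen, le_rfl, hsdw, fun c hce hcf hadj => ?_⟩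
        have := hSDw c (by omega) hadj
        have hc : c = nr - 1 := by omega
        exact hf ⟨by omega, hc ▸ hadj⟩
    obtain ⟨f, hef, hfn, hsdrf, hFno⟩ := hF
    -- now split into the special case (k = 1 and q k has a neighbor in Bj) and the general one
    by_cases hQk : ∃ ww ∈ Bj, G.Adj (q k) ww
    · -- q k is in the Bj-connector of Bi : then k = 1 and x is adjacent to q 1
      obtain ⟨yk, hyk, hqkyk⟩ := hQk
      have hxqk : G.Adj (q 0) (q k) := by
        rcases Nat.lt_or_ge k 2 with h | h
        · have : k = 1 := by omega
          rw [this]; exact hadjq 0 (by omega)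
        · exfalso
          have hx2 : G.Adj (q 0) (q k) :=
            T2 hPO hBP Bi hBi Bj hBj hij (q 0) hx (q k) (hmemq k le_rfl) (s 0) hy yk hyk hxy
              hqkyk (nq.ne 0 k (by omega) le_rfl)
          have := hkmin 1 ⟨by omega, fun l => if l = 0 then q 0 else q k, by
              simpa using ipath_edge hx2 hx (hmemq k le_rfl), r 0, hzBl, by simpa using hqkz⟩
          omega
      have hUy : G.Adj (q k) (s 0) :=
        T3 hPO hBP Bi hBi Bj hBj hij (q k) (hmemq k le_rfl) yk hyk (q 0) hx (s 0) hy
          hqkyk hxy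
      -- window of q k on the s-path
      have hUSw : ∀ b ≤ d, G.Adj (q k) (s b) → b ≤ 1 := fun b hbd hadj =>
        window hPO hBP hBi hBj hij (hmemq k le_rfl) hmems ns hUy hadj (Nat.zero_le b) hbd
      have hGu : ∃ g, g ≤ d ∧ g ≤ 1 ∧ G.Adj (q k) (s g) ∧
          ∀ b, g < b → b ≤ d → ¬ G.Adj (q k) (s b) := by
        by_cases hg : 1 ≤ d ∧ G.Adj (q k) (s 1)
        · refine ⟨1, hg.1, le_rfl, hg.2, fun b hb hbd hadj => ?_⟩
          have := hUSw b hbd hadj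
          omega
        · refine ⟨0, Nat.zero_le d, Nat.zero_le 1, hUy, fun b hb hbd hadj => ?_⟩
          have := hUSw b hbd hadj
          have hb1 : b = 1 := by omega
          exact hg ⟨by omega, hb1 ▸ hadj⟩
      obtain ⟨g, hgd, hg1, hqksg, hGno⟩ := hGu
      rcases Nat.lt_or_ge (f - e + (d - g)) 1 with hdeg | hdeg
      · -- triangle (q k, r e, s g)
        have hfe : f = e := by omega
        have hdg : d = g := by omega
        have hresg : G.Adj (r e) (s g) := by rw [← hfe, ← hdg] at *; exact hsdrf.symm
        rcases Nat.eq_zero_or_pos g with hgz | hgpos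
        · -- g = 0 : diamond on (q k, s 0) with x and r e
          subst hgz
          have dia : IsDiamondDiagonal G (q k) (s 0) :=
            ⟨hqksg, q 0, r e, bp_ne hBP hBi hBl hil hx (hmemr e (by omega)),
              nq.ne 0 k (by omega) le_rfl, bp_ne hBP hBi hBj hij hx hy,
              bp_ne hBP hBl hBi (fun h => hil h.symm) (hmemr e (by omega)) (hmemq k le_rfl),
              bp_ne hBP hBl hBj (fun h => hjl h.symm) (hmemr e (by omega)) hy,
              fun h => hno (r e) (hmemr e (by omega)) h, hxqk, hxy, hqkre.symm, hresg⟩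
          exact dd_kill hBP hBi hBj hij (hmemq k le_rfl) hy dia
        · -- g = 1, d = 1 : diamond on (q k, s 1)
          have hg1' : g = 1 := by omega
          have hd1 : d = 1 := by omega
          subst hg1'
          by_cases hxs1 : G.Adj (q 0) (s 1)
          · have dia : IsDiamondDiagonal G (q k) (s 1) :=
              ⟨hqksg, q 0, r e, bp_ne hBP hBi hBl hil hx (hmemr e (by omega)),
                nq.ne 0 k (by omega) le_rfl, bp_ne hBP hBi hBj hij hx (hmems 1 (by omega)),
                bp_ne hBP hBl hBi (fun h => hil h.symm) (hmemr e (by omega)) (hmemq k le_rfl),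
                bp_ne hBP hBl hBj (fun h => hjl h.symm) (hmemr e (by omega)) (hmems 1 (by omega)),
                fun h => hno (r e) (hmemr e (by omega)) h, hxqk, hxs1, hqkre.symm, hresg⟩
            exact dd_kill hBP hBi hBj hij (hmemq k le_rfl) (hmems 1 (by omega)) dia
          · have dia : IsDiamondDiagonal G (q k) (s 1) :=
              ⟨hqksg, s 0, r e, bp_ne hBP hBj hBl hjl hy (hmemr e (by omega)),
                bp_ne hBP hBj hBi hij.symm hy (hmemq k le_rfl),
                ns.ne 0 1 (by omega) (by omega),
                bp_ne hBP hBl hBi (fun h => hil h.symm) (hmemr e (by omega)) (hmemq k le_rfl),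
                bp_ne hBP hBl hBj (fun h => hjl h.symm) (hmemr e (by omega)) (hmems 1 (by omega)),
                fun h => hSnoL 0 (by omega) (r e) (hmemr e (by omega)) h,
                hUy.symm, hadjs 0 (by omega), hqkre.symm, hresg⟩
            exact dd_kill hBP hBi hBj hij (hmemq k le_rfl) (hmems 1 (by omega)) dia
      · rcases Nat.lt_or_ge (f - e + (d - g)) 2 with hdeg2 | hdeg2
        · -- an induced C4 through (q k) and the r/s paths
          rcases Nat.eq_or_lt_of_le (show e ≤ f from hef) with hfe | hfe
          · -- f = e, d = g + 1 : C4 (q k, r e, s d, s g)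
            have hdg : d = g + 1 := by omega
            have hresd : G.Adj (r e) (s d) := by rw [hfe]; exact hsdrf.symm
            have h4 : IsInducedC4 G (q k) (r e) (s d) (s g) :=
              ⟨bp_ne hBP hBi hBl hil (hmemq k le_rfl) (hmemr e (by omega)),
                bp_ne hBP hBi hBj hij (hmemq k le_rfl) (hmems d le_rfl),
                bp_ne hBP hBi hBj hij (hmemq k le_rfl) (hmems g (by omega)),
                bp_ne hBP hBl hBj (fun h => hjl h.symm) (hmemr e (by omega)) (hmems d le_rfl),
                bp_ne hBP hBl hBj (fun h => hjl h.symm) (hmemr e (by omega)) (hmems g (by omega)),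
                (ns.ne g d (by omega) le_rfl).symm,
                hqkre, hresd, by
                  have := (hadjs g (by omega)).symm
                  rwa [show g + 1 = d by omega] at this, hqksg.symm,
                hGno d (by omega) le_rfl,
                fun h => hSnoL g (by omega) (r e) (hmemr e (by omega)) h.symm⟩
            exact c4_kill hBP h4 hBj (show s d ∈ ({q k, r e, s d, s g} : Set V) by simp)
              (show s g ∈ ({q k, r e, s d, s g} : Set V) by simp)
              (ns.ne g d (by omega) le_rfl).symm (hmems d le_rfl) (hmems g (by omega))
          · -- f = e + 1, d = g : C4 (q k, r e, r f, s g)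
            have hfe1 : f = e + 1 := by omega
            have hdg : d = g := by omega
            have h4 : IsInducedC4 G (q k) (r e) (r f) (s g) :=
              ⟨bp_ne hBP hBi hBl hil (hmemq k le_rfl) (hmemr e (by omega)),
                bp_ne hBP hBi hBl hil (hmemq k le_rfl) (hmemr f (by omega)),
                bp_ne hBP hBi hBj hij (hmemq k le_rfl) (hmems g (by omega)),
                nrr.ne e f (by omega) (by omega),
                bp_ne hBP hBl hBj (fun h => hjl h.symm) (hmemr e (by omega)) (hmems g (by omega)),
                bp_ne hBP hBl hBj (fun h => hjl h.symm) (hmemr f (by omega)) (hmems g (by omega)),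
                hqkre, by
                  have := hadjr e (by omega)
                  rwa [show e + 1 = f by omega] at this,
                (by rw [← hdg] at *; exact hsdrf.symm), hqksg.symm,
                hEno f (by omega) (by omega),
                fun h => hFno e le_rfl (by omega) (by rw [← hdg] at h; exact h.symm)⟩
            exact c4_kill hBP h4 hBl (show r e ∈ ({q k, r e, r f, s g} : Set V) by simp)
              (show r f ∈ ({q k, r e, r f, s g} : Set V) by simp)
              (nrr.ne e f (by omega) (by omega)) (hmemr e (by omega)) (hmemr f (by omega))
        · -- long cycle : fan with apex q k
          have np := NicePath.concat (G := G) (nrr.sub hef hfn) ((ns.rev).take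
            (show d - g ≤ d by omega)) ?_ ?_ ?_
          rotate_left
          · show G.Adj (r (e + (f - e))) (s (d - 0))
            rw [show e + (f - e) = f by omega, Nat.sub_zero]
            exact hsdrf.symm
          · intro i hi j hj hnj
            show ¬ G.Adj (r (e + i)) (s (d - j))
            rcases Nat.eq_zero_or_pos j with hj0 | hj0
            · subst hj0
              rw [Nat.sub_zero]
              intro hadj
              exact hFno (e + i) (by omega) (by
                rcases Nat.lt_or_ge (e + i) f with h | h
                · exact h
                · exact absurd ⟨by omega, rfl⟩ hnj) hadj.symm
            · exact fun hadj =>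
                hSnoL (d - j) (by omega) (r (e + i)) (hmemr (e + i) (by omega)) hadj.symm
          · intro i hi j hj
            exact bp_ne hBP hBl hBj (fun h => hjl h.symm) (hmemr (e + i) (by omega))
              (hmems (d - j) (by omega))
          · refine fan hPO (z := q k) np (by omega) ?_ ?_ ?_
            · have h0 : (0 : ℕ) ≤ f - e := Nat.zero_le _
              simp only [h0, if_true]
              show G.Adj (q k) (r (e + 0))
              rw [Nat.add_zero]
              exact hqkre
            · have hK : ¬ (f - e + (d - g) + 1 ≤ f - e) := by omega
              simp only [hK, if_false]
              show G.Adj (q k) (s (d - (f - e + (d - g) + 1 - (f - e) - 1)))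
              rw [show f - e + (d - g) + 1 - (f - e) - 1 = d - g by omega,
                show d - (d - g) = g by omega]
              exact hqksg
            · intro i h1 hiK
              by_cases hif : i ≤ f - e
              · simp only [hif, if_true]
                refine ⟨hEno (e + i) (by omega) (by omega), ?_⟩
                exact bp_ne hBP hBi hBl hil (hmemq k le_rfl) (hmemr (e + i) (by omega))
              · simp only [hif, if_false]
                refine ⟨hGno (d - (i - (f - e) - 1)) (by omega) (by omega), ?_⟩
                exact bp_ne hBP hBi hBj hij (hmemq k le_rfl)
                  (hmems (d - (i - (f - e) - 1)) (by omega))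
    · -- general case : q k has no neighbor in Bj
      push_neg at hQk
      have hQnoJ : ∀ a, 1 ≤ a → a ≤ k → ∀ ww ∈ Bj, ¬ G.Adj (q a) ww := by
        intro a h1 hak ww hww hadj
        rcases Nat.lt_or_ge a k with h | h
        · exact hIntJ a h1 h ww hww hadj
        · have : a = k := by omega
          exact hQk ww hww (this ▸ hadj)
      have hG : ∃ g, g ≤ d ∧ g ≤ 1 ∧ G.Adj (q 0) (s g) ∧
          ∀ b, g < b → b ≤ d → ¬ G.Adj (q 0) (s b) := by
        by_cases hg : 1 ≤ d ∧ G.Adj (q 0) (s 1)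
        · refine ⟨1, hg.1, le_rfl, hg.2, fun b hb hbd hadj => ?_⟩
          have := hXSw b hbd hadj
          omega
        · refine ⟨0, Nat.zero_le d, Nat.zero_le 1, hxy, fun b hb hbd hadj => ?_⟩
          have := hXSw b hbd hadj
          have hb1 : b = 1 := by omega
          exact hg ⟨by omega, hb1 ▸ hadj⟩
      obtain ⟨g, hgd, hg1, hxsg, hGno⟩ := hG
      by_cases hdeg : k = 1 ∧ f = e ∧ d = g
      · -- induced C4 (q 0, q 1, r e, s g)
        obtain ⟨hkk, hfe, hdg⟩ := hdeg
        have hresg : G.Adj (r e) (s g) := by rw [← hfe, ← hdg] at *; exact hsdrf.symm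
        have h4 : IsInducedC4 G (q 0) (q k) (r e) (s g) :=
          ⟨nq.ne 0 k (by omega) le_rfl,
            bp_ne hBP hBi hBl hil hx (hmemr e (by omega)),
            bp_ne hBP hBi hBj hij hx (hmems g (by omega)),
            bp_ne hBP hBi hBl hil (hmemq k le_rfl) (hmemr e (by omega)),
            bp_ne hBP hBi hBj hij (hmemq k le_rfl) (hmems g (by omega)),
            bp_ne hBP hBl hBj (fun h => hjl h.symm) (hmemr e (by omega)) (hmems g (by omega)),
            by rw [hkk]; exact hadjq 0 (by omega), hqkre, hresg, hxsg.symm,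
            fun h => hno (r e) (hmemr e (by omega)) h,
            hQnoJ k (by omega) le_rfl (s g) (hmems g (by omega))⟩
        exact c4_kill hBP h4 hBi (show q 0 ∈ ({q 0, q k, r e, s g} : Set V) by simp)
          (show q k ∈ ({q 0, q k, r e, s g} : Set V) by simp)
          (nq.ne 0 k (by omega) le_rfl) hx (hmemq k le_rfl)
      · -- long cycle : fan with apex q 0 = x
        have np1 := NicePath.concat (G := G) (nq.sub (show 1 ≤ k from hk1) le_rfl)
          (nrr.sub hef hfn) ?_ ?_ ?_
        rotate_left
        · show G.Adj (q (1 + (k - 1))) (r (e + 0))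
          rw [show 1 + (k - 1) = k by omega, Nat.add_zero]
          exact hqkre
        · intro i hi j hj hnj
          show ¬ G.Adj (q (1 + i)) (r (e + j))
          rcases Nat.lt_or_ge (1 + i) k with h | h
          · exact fun hadj => hQnoL (1 + i) h (r (e + j)) (hmemr (e + j) (by omega)) hadj
          · have hik : 1 + i = k := by omega
            rw [hik]
            refine hEno (e + j) (by
              rcases Nat.eq_zero_or_pos j with h0 | h0
              · exact absurd ⟨by omega, h0⟩ hnj
              · omega) (by omega)
        · intro i hi j hj
          exact bp_ne hBP hBi hBl hil (hmemq (1 + i) (by omega)) (hmemr (e + j) (by omega))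
        · have np := NicePath.concat (G := G) np1 ((ns.rev).take (show d - g ≤ d by omega))
            ?_ ?_ ?_
          rotate_left
          · have hK : ¬ (k - 1 + (f - e) + 1 ≤ k - 1) := by omega
            simp only [hK, if_false]
            show G.Adj (r (e + (k - 1 + (f - e) + 1 - (k - 1) - 1))) (s (d - 0))
            rw [show k - 1 + (f - e) + 1 - (k - 1) - 1 = f - e by omega,
              show e + (f - e) = f by omega, Nat.sub_zero]
            exact hsdrf.symm
          · intro i hi j hj hnj
            by_cases hik : i ≤ k - 1
            · simp only [hik, if_true]
              show ¬ G.Adj (q (1 + i)) (s (d - j))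
              exact hQnoJ (1 + i) (by omega) (by omega) (s (d - j)) (hmems (d - j) (by omega))
            · simp only [hik, if_false]
              show ¬ G.Adj (r (e + (i - (k - 1) - 1))) (s (d - j))
              rcases Nat.eq_zero_or_pos j with hj0 | hj0
              · subst hj0
                rw [Nat.sub_zero]
                intro hadj
                refine hFno (e + (i - (k - 1) - 1)) (by omega) (by
                  rcases Nat.lt_or_ge (e + (i - (k - 1) - 1)) f with h | h
                  · exact h
                  · exact absurd ⟨by omega, rfl⟩ hnj) hadj.symm
              · exact fun hadj => hSnoL (d - j) (by omega) (r (e + (i - (k - 1) - 1)))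
                  (hmemr (e + (i - (k - 1) - 1)) (by omega)) hadj.symm
          · intro i hi j hj
            by_cases hik : i ≤ k - 1
            · simp only [hik, if_true]
              exact bp_ne hBP hBi hBj hij (hmemq (1 + i) (by omega)) (hmems (d - j) (by omega))
            · simp only [hik, if_false]
              exact bp_ne hBP hBl hBj (fun h => hjl h.symm)
                (hmemr (e + (i - (k - 1) - 1)) (by omega)) (hmems (d - j) (by omega))
          · refine fan hPO (z := q 0) np (by omega) ?_ ?_ ?_
            · have h0 : (0 : ℕ) ≤ k - 1 + (f - e) + 1 := Nat.zero_le _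
              have h0' : (0 : ℕ) ≤ k - 1 := Nat.zero_le _
              simp only [h0, h0', if_true]
              show G.Adj (q 0) (q (1 + 0))
              exact hadjq 0 (by omega)
            · have hK : ¬ (k - 1 + (f - e) + 1 + (d - g) + 1 ≤ k - 1 + (f - e) + 1) := by omega
              simp only [hK, if_false]
              show G.Adj (q 0)
                (s (d - (k - 1 + (f - e) + 1 + (d - g) + 1 - (k - 1 + (f - e) + 1) - 1)))
              rw [show k - 1 + (f - e) + 1 + (d - g) + 1 - (k - 1 + (f - e) + 1) - 1 = d - g
                by omega, show d - (d - g) = g by omega]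
              exact hxsg
            · intro i h1 hiK
              by_cases hi12 : i ≤ k - 1 + (f - e) + 1
              · by_cases hik : i ≤ k - 1
                · simp only [hi12, hik, if_true]
                  refine ⟨nq.nadj 0 (1 + i) (by omega) (by omega), nq.ne 0 (1 + i) (by omega)
                    (by omega)⟩
                · simp only [hi12, hik, if_true, if_false]
                  refine ⟨fun h => hno (r (e + (i - (k - 1) - 1)))
                    (hmemr (e + (i - (k - 1) - 1)) (by omega)) h, ?_⟩
                  exact bp_ne hBP hBi hBl hil hx (hmemr (e + (i - (k - 1) - 1)) (by omega))
              · simp only [hi12, if_false]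
                refine ⟨hGno (d - (i - (k - 1 + (f - e) + 1) - 1)) (by omega) (by omega), ?_⟩
                exact bp_ne hBP hBi hBj hij hx
                  (hmems (d - (i - (k - 1 + (f - e) + 1) - 1)) (by omega))
  intro x hx y hy hxy
  obtain ⟨u, hu, zz, hzz, huz⟩ := hPAil
  obtain ⟨n0, q0, hq0⟩ := ipath_exists (hBP.2.2.2.1 Bi hBi) hx hu
  exact main n0 x hx ⟨y, hy, hxy⟩ ⟨u, q0, hq0, zz, hzz, huz⟩

end Key1

end BranchTri

theorem branch_triangle_clique {V : Type*} [Fintype V]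
    (G : SimpleGraph V) (hG : IsCocomparability G)
    (P : Set (Set V)) (hP : IsBranchPartition G P)
    (B : ZMod 3 → Set V)
    (hmem : ∀ i : ZMod 3, B i ∈ P)
    (hinj : Function.Injective B)
    (hadj : ∀ i j : ZMod 3, i ≠ j → PartsAdjacent G (B i) (B j)) :
    (∀ i : ZMod 3, Bset G (B i) (B (i - 1)) = Bset G (B i) (B (i + 1))) ∧
    G.IsClique (Bset G (B 0) (B 1) ∪ Bset G (B 1) (B 2) ∪ Bset G (B 2) (B 0)) := by
  classical
  obtain ⟨PO, hPO⟩ := hG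
  have hne : ∀ i j : ZMod 3, i ≠ j → B i ≠ B j := fun i j h e => h (hinj e)
  have hz1 : ∀ i : ZMod 3, i ≠ i - 1 := by decide
  have hz2 : ∀ i : ZMod 3, i ≠ i + 1 := by decide
  have hz3 : ∀ i : ZMod 3, i - 1 ≠ i + 1 := by decide
  have hPA : ∀ i j : ZMod 3, i ≠ j → ∃ u ∈ B i, ∃ v ∈ B j, G.Adj u v := fun i j h =>
    hadj i j h
  have hEq : ∀ i : ZMod 3, Bset G (B i) (B (i - 1)) = Bset G (B i) (B (i + 1)) := by
    intro i
    ext v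
    simp only [Bset, Set.mem_setOf_eq, Set.mem_sep_iff]
    constructor
    · rintro ⟨hvB, u, hu, hadjvu⟩
      refine ⟨hvB, ?_⟩
      exact BranchTri.key1 hPO hP (hmem i) (hmem (i - 1)) (hmem (i + 1)) (hne _ _ (hz1 i))
        (hne _ _ (hz2 i)) (hne _ _ (hz3 i)) (hPA i (i + 1) (hz2 i))
        (hPA (i - 1) (i + 1) (hz3 i)) v hvB u hu hadjvu
    · rintro ⟨hvB, u, hu, hadjvu⟩
      refine ⟨hvB, ?_⟩
      exact BranchTri.key1 hPO hP (hmem i) (hmem (i + 1)) (hmem (i - 1)) (hne _ _ (hz2 i))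
        (hne _ _ (hz1 i)) (hne _ _ (hz3 i).symm) (hPA i (i - 1) (hz1 i))
        (hPA (i + 1) (i - 1) (hz3 i).symm) v hvB u hu hadjvu
  refine ⟨hEq, ?_⟩
  have hT3' : ∀ i j : ZMod 3, i ≠ j → ∀ u v : V, u ∈ Bset G (B i) (B j) →
      v ∈ Bset G (B j) (B i) → G.Adj u v := by
    intro i j hij u v hu hv
    obtain ⟨huB, w, hw, huw⟩ := hu
    obtain ⟨hvB, a, ha, hva⟩ := hv
    exact BranchTri.T3 hPO hP (B i) (hmem i) (B j) (hmem j) (hne i j hij) u huB w hw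
      a ha v hvB huw hva.symm
  have hT2' : ∀ i j : ZMod 3, i ≠ j → ∀ u v : V, u ∈ Bset G (B i) (B j) →
      v ∈ Bset G (B i) (B j) → u ≠ v → G.Adj u v := by
    intro i j hij u v hu hv huv
    obtain ⟨huB, w, hw, huw⟩ := hu
    obtain ⟨hvB, a, ha, hva⟩ := hv
    exact BranchTri.T2 hPO hP (B i) (hmem i) (B j) (hmem j) (hne i j hij) u huB v hvB
      w hw a ha huw hva huv
  have e0 : Bset G (B 0) (B 2) = Bset G (B 0) (B 1) := by
    have := hEq 0
    rwa [show (0 - 1 : ZMod 3) = 2 by decide, show (0 + 1 : ZMod 3) = 1 by decide] at this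
  have e1 : Bset G (B 1) (B 0) = Bset G (B 1) (B 2) := by
    have := hEq 1
    rwa [show (1 - 1 : ZMod 3) = 0 by decide, show (1 + 1 : ZMod 3) = 2 by decide] at this
  have e2 : Bset G (B 2) (B 1) = Bset G (B 2) (B 0) := by
    have := hEq 2
    rwa [show (2 - 1 : ZMod 3) = 1 by decide, show (2 + 1 : ZMod 3) = 0 by decide] at this
  intro u hu v hv huv
  rcases hu with (hu | hu) | hu <;> rcases hv with (hv | hv) | hv
  · exact hT2' 0 1 (by decide) u v hu hv huv
  · rw [← e1] at hv
    exact hT3' 0 1 (by decide) u v hu hv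
  · rw [← e0] at hu
    exact hT3' 0 2 (by decide) u v hu hv
  · rw [← e1] at hu
    exact hT3' 1 0 (by decide) u v hu hv
  · exact hT2' 1 2 (by decide) u v hu hv huv
  · rw [← e2] at hv
    exact hT3' 1 2 (by decide) u v hu hv
  · rw [← e0] at hv
    exact hT3' 2 0 (by decide) u v hu hv
  · rw [← e2] at hu
    exact hT3' 2 1 (by decide) u v hu hv
  · exact hT2' 2 0 (by decide) u v hu hv huv
end

section
/- Let G be a finite simple graph with an umbrella-free ordering σ, and let A and B be disjoint nonempty sets of vertices such that the subgraphs of G induced by A and by B are connected and there is no edge of G between A and B. If the σ-least element of A strictly σ-precedes the σ-least element of B, then a <_σ b for every a ∈ A and every b ∈ B. -/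
theorem umbrellaFree_separated_components {V : Type*} [Fintype V]
    (G : SimpleGraph V) (σ : LinearOrder V) (h : UmbrellaFree G σ)
    (A B : Set V) (hA : A.Nonempty) (hB : B.Nonempty)
    (hdisj : Disjoint A B)
    (hconnA : (SimpleGraph.induce A G).Connected)
    (hconnB : (SimpleGraph.induce B G).Connected)
    (hnoedge : ∀ a ∈ A, ∀ b ∈ B, ¬ G.Adj a b)
    (hmin : ∃ a0 ∈ A, ∃ b0 ∈ B,
      (∀ a ∈ A, σ.le a0 a) ∧ (∀ b ∈ B, σ.le b0 b) ∧ σ.lt a0 b0) :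
    ∀ a ∈ A, ∀ b ∈ B, σ.lt a b := by
  letI := σ
  obtain ⟨a0, ha0, b0, hb0, hminA, hminB, hab⟩ := hmin
  intro a ha b hb
  by_contra hcon
  have hba : σ.lt b a := by
    rcases lt_trichotomy a b with h1 | h1 | h1
    · exact absurd h1 hcon
    · exact absurd (h1 ▸ ha) (fun hh => hdisj.ne_of_mem hh hb rfl)
    · exact h1
  have ha0b : σ.lt a0 b := lt_of_lt_of_le hab (hminB b hb)
  have key : ∀ (x y : ↥A) (p : (SimpleGraph.induce A G).Walk x y),
      σ.lt ↑x b → σ.lt b ↑y → False := by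
    intro x y p
    induction p with
    | nil => intro h1 h2; exact lt_asymm h1 h2
    | cons hadj p ih =>
      rename_i u v w
      intro hx hy
      rcases lt_trichotomy (↑v : V) b with h1 | h1 | h1
      · exact ih h1 hy
      · exact hdisj.ne_of_mem v.2 hb h1
      · have hguv : G.Adj ↑u ↑v := hadj
        rcases h ↑u b ↑v hx h1 hguv with he | he
        · exact hnoedge ↑u u.2 b hb he
        · exact hnoedge ↑v v.2 b hb he.symm
  obtain ⟨p⟩ := hconnA.preconnected ⟨a0, ha0⟩ ⟨a, ha⟩
  exact key _ _ p ha0b hba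
end

section
/- Let G be a finite simple graph with an umbrella-free ordering σ. If u, v, w are vertices with u <_σ v <_σ w, a vertex x is adjacent to both u and w, and v is adjacent to neither u nor w, then x is adjacent to v. (In particular, in a bipartite graph with an umbrella-free ordering, the neighborhood of every vertex of one side is consecutive among the vertices of the other side, i.e., the ordering has the adjacency property.) -/
theorem umbrellaFree_adjacency_property {V : Type*} [Fintype V]
    (G : SimpleGraph V) (σ : LinearOrder V) (h : UmbrellaFree G σ)
    (u v w x : V) (huv : σ.lt u v) (hvw : σ.lt v w)
    (hxu : G.Adj x u) (hxw : G.Adj x w)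
    (hvu : ¬ G.Adj v u) (hvwadj : ¬ G.Adj v w) :
    G.Adj x v := by
  letI := σ
  have hxv : x ≠ v := fun e => hvu (by rw [← e]; exact hxu)
  rcases lt_trichotomy x v with hlt | he | hgt
  case inr.inl => exact absurd he hxv
  · rcases h x v w hlt hvw hxw with h1 | h1
    · exact h1
    · exact absurd h1 hvwadj
  · rcases h u v x huv hgt hxu.symm with h1 | h1
    · exact absurd h1.symm hvu
    · exact h1.symm
end
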